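/- Let θ ∈ ℝ and g = [[a,b],[c,d]] ∈ SL₂(ℤ) with c > 0 and cθ + d ≠ 0, and set gθ = (aθ+b)/(cθ+d). On the space E of functions f : ℝ × (ℤ/cℤ) → ℂ that are Schwartz in the first variable, define the right-action operators (fU)(x,α) = f(x − (cθ+d)/c, α − 1), (fV)(x,α) = e^{2πi(x − d·α̃/c)} f(x,α), and the left-action operators (U'f)(x,α) = f(x − 1/c, α − a), (V'f)(x,α) = e^{2πi(x/(cθ+d) − α̃/c)} f(x,α), where α̃ ∈ ℤ represents α. Then: (i) U' and V' map E into E; (ii) U'V' = e^{2πi·gθ} V'U' as operators on E; and (iii) each of U', V' commutes with each of the right-action operators U, V, i.e. (U'f)U = U'(fU), (U'f)V = U'(fV), (V'f)U = V'(fU), (V'f)V = V'(fV) for all f ∈ E. -/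

import Mathlib

open scoped Real

noncomputable section

/-- Membership in `E = 𝒮(ℝ × ℤ/cℤ)`: for each `α`, the slice `x ↦ f(x, α)` is a Schwartz
function. -/
def MemSchwartzModule {c : ℕ} (f : ℝ × ZMod c → ℂ) : Prop :=
  ∀ α : ZMod c, ∃ g : SchwartzMap ℝ ℂ, ∀ x : ℝ, f (x, α) = g x

/-- The right action of `U`: `(fU)(x,α) = f(x − (cθ+d)/c, α − 1)`. -/
def actU (θ : ℝ) (c : ℕ) (d : ℤ) (f : ℝ × ZMod c → ℂ) : ℝ × ZMod c → ℂ :=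
  fun p => f (p.1 - ((c : ℝ) * θ + (d : ℝ)) / (c : ℝ), p.2 - 1)

/-- The right action of `V`: `(fV)(x,α) = e^{2πi(x − d·α̃/c)}·f(x,α)`, where `α̃ ∈ ℤ` is the
canonical representative of `α`. -/
def actV (c : ℕ) (d : ℤ) (f : ℝ × ZMod c → ℂ) : ℝ × ZMod c → ℂ :=
  fun p => Complex.exp (2 * π * Complex.I *
      ((p.1 : ℂ) - (d : ℂ) * ((p.2.val : ℤ) : ℂ) / (c : ℂ))) * f p

/-- The left action of `U'`: `(U'f)(x,α) = f(x − 1/c, α − a)`. -/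
def actU' (c : ℕ) (a : ℤ) (f : ℝ × ZMod c → ℂ) : ℝ × ZMod c → ℂ :=
  fun p => f (p.1 - 1 / (c : ℝ), p.2 - (a : ZMod c))

/-- The left action of `V'`: `(V'f)(x,α) = e^{2πi(x/(cθ+d) − α̃/c)}·f(x,α)`. -/
def actV' (θ : ℝ) (c : ℕ) (d : ℤ) (f : ℝ × ZMod c → ℂ) : ℝ × ZMod c → ℂ :=
  fun p => Complex.exp (2 * π * Complex.I *
      ((p.1 : ℂ) / ((c : ℂ) * θ + (d : ℂ)) - ((p.2.val : ℤ) : ℂ) / (c : ℂ))) * f p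

/- ## Auxiliary lemmas -/

/-- Translation on `ℝ` has temperate growth. -/
lemma tg_shift (r : ℝ) : Function.HasTemperateGrowth (fun x : ℝ => x - r) := by
  apply Function.HasTemperateGrowth.of_fderiv (k := 1) (C := 1 + |r|)
  · have : (fderiv ℝ (fun x : ℝ => x - r)) = fun _ : ℝ =>
        (ContinuousLinearMap.smulRight (1 : ℝ →L[ℝ] ℝ) 1) := by
      funext x
      have : HasFDerivAt (fun x : ℝ => x - r)
          (ContinuousLinearMap.smulRight (1 : ℝ →L[ℝ] ℝ) 1) x :=
        ((hasDerivAt_id x).sub_const r).hasFDerivAt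
      exact this.fderiv
    rw [this]
    exact Function.HasTemperateGrowth.const _
  · exact (differentiable_id.sub_const r)
  · intro x
    have : ‖x - r‖ ≤ ‖x‖ + |r| := by
      simpa [Real.norm_eq_abs] using abs_sub x r
    nlinarith [norm_nonneg x, abs_nonneg r, this]

/-- The lower bound needed to compose Schwartz maps with a translation. -/
lemma shift_upper (r : ℝ) : ∃ (k : ℕ) (C : ℝ), ∀ x : ℝ, ‖x‖ ≤ C * (1 + ‖x - r‖) ^ k := by
  refine ⟨1, 1 + |r|, fun x => ?_⟩
  have h1 : ‖x‖ ≤ ‖x - r‖ + |r| := by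
    have := abs_sub_abs_le_abs_sub x r
    simp only [Real.norm_eq_abs]
    linarith
  nlinarith [norm_nonneg (x - r), abs_nonneg r, h1]

lemma deriv_exp_affine (c d : ℂ) (x : ℝ) :
    HasDerivAt (fun x : ℝ => Complex.exp (c * x + d)) (c * Complex.exp (c * x + d)) x := by
  have h : HasDerivAt (fun z : ℂ => Complex.exp (c * z + d))
      (Complex.exp (c * (x:ℂ) + d) * c) (x : ℂ) := by
    simpa using (((hasDerivAt_id (x:ℂ)).const_mul c).add_const d).cexp
  simpa [mul_comm] using h.comp_ofReal

/-- An imaginary-affine complex exponential has temperate growth. -/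
lemma tg_exp (c d : ℂ) (hc : c.re = 0) :
    Function.HasTemperateGrowth (fun x : ℝ => Complex.exp (c * x + d)) := by
  constructor
  · exact Complex.contDiff_exp.comp
      (((contDiff_const.mul Complex.ofRealCLM.contDiff).add contDiff_const))
  · intro n
    refine ⟨0, ‖c‖ ^ n * Real.exp d.re, fun x => ?_⟩
    have key : ∀ m : ℕ, iteratedDeriv m (fun x : ℝ => Complex.exp (c * x + d))
        = fun x : ℝ => c ^ m * Complex.exp (c * x + d) := by
      intro m
      induction m with
      | zero => simp
      | succ m ih =>
        rw [iteratedDeriv_succ, ih]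
        funext x
        have := ((deriv_exp_affine c d x).const_mul (c ^ m)).deriv
        simpa [pow_succ, mul_assoc, mul_comm, mul_left_comm] using this
    rw [norm_iteratedFDeriv_eq_norm_iteratedDeriv, key]
    have hre : (c * x + d).re = d.re := by
      simp [Complex.add_re, Complex.mul_re, hc]
    simp [norm_mul, Complex.norm_exp, hre]

/-- `(α - a).val ≡ α.val - a  (mod c)`, in explicit form. -/
lemma zmod_val_sub (c : ℕ) [NeZero c] (α : ZMod c) (a : ℤ) :
    ∃ k : ℤ, (((α - (a : ZMod c)).val : ℤ)) = (α.val : ℤ) - a + c * k := by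
  have h : ((((α.val : ℤ) - a - ((α - (a : ZMod c)).val : ℤ)) : ℤ) : ZMod c) = 0 := by
    push_cast
    simp [ZMod.natCast_val, ZMod.cast_id]
  obtain ⟨k, hk⟩ := (ZMod.intCast_zmod_eq_zero_iff_dvd _ c).mp h
  exact ⟨-k, by linarith⟩

theorem statement9 (θ : ℝ) (a b : ℤ) (c : ℕ) (d : ℤ)
    (hdet : a * d - b * (c : ℤ) = 1) (hc : 0 < c) (hcd : (c : ℝ) * θ + (d : ℝ) ≠ 0) :
    (∀ f : ℝ × ZMod c → ℂ, MemSchwartzModule f →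
      MemSchwartzModule (actU' c a f) ∧ MemSchwartzModule (actV' θ c d f)) ∧
    (∀ f : ℝ × ZMod c → ℂ, MemSchwartzModule f →
      actU' c a (actV' θ c d f)
        = fun p => Complex.exp (2 * π * Complex.I *
            ((((a : ℝ) * θ + (b : ℝ)) / ((c : ℝ) * θ + (d : ℝ)) : ℝ) : ℂ)) *
          actV' θ c d (actU' c a f) p) ∧
    (∀ f : ℝ × ZMod c → ℂ, MemSchwartzModule f →
      actU θ c d (actU' c a f) = actU' c a (actU θ c d f) ∧
      actV c d (actU' c a f) = actU' c a (actV c d f) ∧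
      actU θ c d (actV' θ c d f) = actV' θ c d (actU θ c d f) ∧
      actV c d (actV' θ c d f) = actV' θ c d (actV c d f)) := by
  haveI : NeZero c := ⟨hc.ne'⟩
  have hc0 : (c : ℝ) ≠ 0 := Nat.cast_ne_zero.mpr hc.ne'
  have hc0' : (c : ℂ) ≠ 0 := Nat.cast_ne_zero.mpr hc.ne'
  have hzc : ((c : ℂ) * (θ : ℂ) + (d : ℂ)) ≠ 0 := by
    have h := Complex.ofReal_ne_zero.mpr hcd
    push_cast at h
    exact h
  have hdetC : (a : ℂ) * (d : ℂ) - (b : ℂ) * (c : ℂ) = 1 := by exact_mod_cast hdet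
  refine ⟨?_, ?_, ?_⟩
  · -- (i) module membership
    intro f hf
    constructor
    · intro α
      obtain ⟨g, hg⟩ := hf (α - (a : ZMod c))
      refine ⟨SchwartzMap.compCLM ℝ (tg_shift (1 / (c:ℝ))) (shift_upper _) g, fun x => ?_⟩
      simp only [actU', SchwartzMap.compCLM_apply, Function.comp_apply]
      exact hg _
    · intro α
      obtain ⟨g, hg⟩ := hf α
      set s : ℝ := 2 * π / ((c:ℝ) * θ + (d:ℝ)) with hs
      set t : ℝ := -(2 * π * (α.val : ℝ) / (c:ℝ)) with ht
      have htg := tg_exp (Complex.I * (s : ℂ)) (Complex.I * (t : ℂ)) (by simp)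
      refine ⟨SchwartzMap.bilinLeftCLM (ContinuousLinearMap.mul ℝ ℂ) htg g, fun x => ?_⟩
      have harg : 2 * (π:ℂ) * Complex.I *
          ((x : ℂ) / ((c : ℂ) * (θ:ℂ) + (d : ℂ)) - ((α.val : ℤ) : ℂ) / (c : ℂ))
          = Complex.I * (s : ℂ) * (x:ℂ) + Complex.I * (t : ℂ) := by
        rw [hs, ht]
        push_cast
        field_simp
        ring
      simp only [actV', harg, hg]
      show _ = g x * Complex.exp _
      ring
  · -- (ii) commutation relation U'V' = e^{2πi gθ} V'U'
    intro f hf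
    funext p
    obtain ⟨x, α⟩ := p
    obtain ⟨k, hk⟩ := zmod_val_sub c α a
    simp only [actU', actV']
    rw [← mul_assoc, ← Complex.exp_add]
    congr 1
    have hk' : (((α - (a:ZMod c)).val : ℤ) : ℂ) = ((α.val:ℤ) : ℂ) - (a:ℂ) + (c:ℂ) * (k:ℂ) := by
      exact_mod_cast congrArg (Int.cast : ℤ → ℂ) hk
    rw [show (2 * (π:ℂ) * Complex.I *
        (((x - 1 / (c:ℝ) : ℝ) : ℂ) / ((c : ℂ) * (θ:ℂ) + (d : ℂ))
          - (((α - (a:ZMod c)).val : ℤ) : ℂ) / (c : ℂ)))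
        = (2 * (π:ℂ) * Complex.I * ((((a : ℝ) * θ + (b : ℝ)) / ((c : ℝ) * θ + (d : ℝ)) : ℝ) : ℂ)
          + 2 * (π:ℂ) * Complex.I *
            ((x : ℂ) / ((c : ℂ) * (θ:ℂ) + (d : ℂ)) - ((α.val : ℤ) : ℂ) / (c : ℂ)))
          + (-k : ℤ) * (2 * (π:ℂ) * Complex.I) from ?_]
    · rw [Complex.exp_add, Complex.exp_int_mul_two_pi_mul_I, mul_one]
    · rw [hk']
      push_cast
      field_simp
      linear_combination hdetC
  · -- (iii) commutation with the right action
    intro f hf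
    refine ⟨?_, ?_, ?_, ?_⟩
    · funext p
      simp only [actU, actU', sub_right_comm]
    · funext p
      obtain ⟨x, α⟩ := p
      obtain ⟨k, hk⟩ := zmod_val_sub c α a
      simp only [actU, actU', actV]
      congr 1
      have hk' : (((α - (a:ZMod c)).val : ℤ) : ℂ) = ((α.val:ℤ) : ℂ) - (a:ℂ) + (c:ℂ) * (k:ℂ) := by
        exact_mod_cast congrArg (Int.cast : ℤ → ℂ) hk
      rw [show (2 * (π:ℂ) * Complex.I * ((x : ℂ) - (d:ℂ) * ((α.val : ℤ) : ℂ) / (c : ℂ)))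
          = 2 * (π:ℂ) * Complex.I * (((x - 1 / (c:ℝ) : ℝ) : ℂ)
              - (d:ℂ) * (((α - (a:ZMod c)).val : ℤ) : ℂ) / (c : ℂ))
            + (-b + d * k : ℤ) * (2 * (π:ℂ) * Complex.I) from ?_]
      · rw [Complex.exp_add, Complex.exp_int_mul_two_pi_mul_I, mul_one]
      · rw [hk']
        push_cast
        field_simp
        linear_combination (-1:ℂ) * hdetC
    · funext p
      obtain ⟨x, α⟩ := p
      obtain ⟨k, hk⟩ := zmod_val_sub c α 1
      simp only [actU, actV']
      congr 1
      have hk' : (((α - ((1:ℤ):ZMod c)).val : ℤ) : ℂ) = ((α.val:ℤ) : ℂ) - 1 + (c:ℂ) * (k:ℂ) := by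
        exact_mod_cast congrArg (Int.cast : ℤ → ℂ) hk
      rw [show ((1:ℤ):ZMod c) = 1 by push_cast; ring] at hk'
      rw [show (2 * (π:ℂ) * Complex.I *
          (((x - ((c:ℝ) * θ + (d:ℝ)) / (c:ℝ) : ℝ) : ℂ) / ((c : ℂ) * (θ:ℂ) + (d : ℂ))
            - (((α - 1).val : ℤ) : ℂ) / (c : ℂ)))
          = 2 * (π:ℂ) * Complex.I *
            ((x : ℂ) / ((c : ℂ) * (θ:ℂ) + (d : ℂ)) - ((α.val : ℤ) : ℂ) / (c : ℂ))
            + (-k : ℤ) * (2 * (π:ℂ) * Complex.I) from ?_]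
      · rw [Complex.exp_add, Complex.exp_int_mul_two_pi_mul_I, mul_one]
      · rw [hk']
        push_cast
        field_simp
        ring
    · funext p
      simp only [actV, actV']
      ring
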